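/- In any commutative semiring satisfying the ℕ*-laws (in particular in ℕ* = ℕ ∪ {∞}), a multivariate polynomial with coefficients in ℕ* either takes a constant value in ℕ on all inputs from ℕ, or takes the value ∞ at the all-∞ tuple. -/

import Mathlib

/-- A multivariate polynomial with coefficients in ℕ* = ℕ∞ either takes a
constant value in ℕ on all inputs from ℕ, or takes the value ∞ at the
all-∞ tuple. -/
theorem stmt_16 (k : ℕ) (p : MvPolynomial (Fin k) ℕ∞) :
    (∃ c : ℕ, ∀ v : Fin k → ℕ,
      MvPolynomial.eval (fun i => (v i : ℕ∞)) p = (c : ℕ∞)) ∨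
    MvPolynomial.eval (fun _ : Fin k => (⊤ : ℕ∞)) p = ⊤ := by
  by_cases h : MvPolynomial.eval (fun _ : Fin k => (⊤ : ℕ∞)) p = ⊤
  · exact Or.inr h
  left
  have hsupp : ∀ m ∈ p.support, m = 0 := by
    intro m hm
    by_contra hm0
    apply h
    rw [MvPolynomial.eval_eq']
    have hprod : (∏ i, (⊤ : ℕ∞) ^ m i) = ⊤ := by
      obtain ⟨i, hi⟩ : ∃ i, m i ≠ 0 := by
        by_contra hc; push_neg at hc
        exact hm0 (Finsupp.ext hc)
      have h1 : ∀ j ∈ Finset.univ, (1 : ℕ∞) ≤ (⊤ : ℕ∞) ^ m j := by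
        intro j _
        exact one_le_pow_of_one_le' le_top (m j)
      have := Finset.single_le_prod' h1 (Finset.mem_univ i)
      rw [ENat.top_pow hi] at this
      exact top_le_iff.mp this
    have hterm : p.coeff m * ∏ i, (⊤ : ℕ∞) ^ m i = ⊤ := by
      rw [hprod]
      exact WithTop.mul_top (MvPolynomial.mem_support_iff.mp hm)
    refine top_le_iff.mp ?_
    calc (⊤ : ℕ∞) = p.coeff m * ∏ i, (⊤ : ℕ∞) ^ m i := hterm.symm
      _ ≤ _ := Finset.single_le_sum (f := fun m' => p.coeff m' * ∏ i, (⊤ : ℕ∞) ^ m' i)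
          (fun _ _ => zero_le) hm
  have hp : p = MvPolynomial.C (p.coeff 0) := by
    ext m
    rw [MvPolynomial.coeff_C]
    by_cases hm : m ∈ p.support
    · have := hsupp m hm; subst this; simp
    · rw [MvPolynomial.notMem_support_iff.mp hm]
      split <;> [skip; rfl]
      next h0 =>
        subst h0
        exact (MvPolynomial.notMem_support_iff.mp hm).symm
  have hne : p.coeff 0 ≠ ⊤ := by
    intro htop
    apply h
    rw [hp, MvPolynomial.eval_C, htop]
  lift p.coeff 0 to ℕ using hne with c hc
  exact ⟨c, fun v => by rw [hp, MvPolynomial.eval_C, hc]⟩
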